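/- Let q ∈ (0,1), p = 1 - q ≤ 1/2. For every integer x ≥ 2, x · ln(1/(1 - q^{x-1})) ≤ C/p for some absolute constant C > 0. That is, the quantity -𝓛(p) = max_{x≥2} x · ln(1/(1 - (1-p)^{x-1})) satisfies -𝓛(p) = O(1/p) uniformly. -/

import Mathlib

open Real

/-- There is a universal constant `C > 0` such that for all `p ∈ (0, 1/2]` and all
integers `x ≥ 2`, `x * ln(1/(1 - (1-p)^(x-1))) ≤ C / p`; i.e. `-𝓛(p) = O(1/p)`. -/
theorem stmt5 :
    ∃ C : ℝ, 0 < C ∧ ∀ p : ℝ, 0 < p → p ≤ 1 / 2 → ∀ x : ℕ, 2 ≤ x →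
      (x : ℝ) * Real.log (1 / (1 - (1 - p) ^ (x - 1))) ≤ C / p := by
  refine ⟨2, by norm_num, ?_⟩
  intro p hp hp2 x hx
  have hxr : (2:ℝ) ≤ (x:ℝ) := by exact_mod_cast hx
  have hcast : ((x - 1 : ℕ) : ℝ) = (x:ℝ) - 1 := by
    have h1 : (1:ℕ) ≤ x := by omega
    push_cast [Nat.cast_sub h1]
    ring
  set t : ℝ := p * ((x:ℝ) - 1) with ht_def
  have hxm1 : (1:ℝ) ≤ (x:ℝ) - 1 := by linarith
  have ht : 0 < t := mul_pos hp (by linarith)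
  have h1t : 0 < 1 + t := by linarith
  have hq0 : (0:ℝ) ≤ 1 - p := by linarith
  have h1 : (1 - p) ^ (x - 1) ≤ Real.exp (-t) := by
    have hqe : 1 - p ≤ Real.exp (-p) := by
      have := Real.add_one_le_exp (-p); linarith
    calc (1 - p) ^ (x - 1) ≤ (Real.exp (-p)) ^ (x - 1) := pow_le_pow_left₀ hq0 hqe _
      _ = Real.exp (-p * ((x - 1 : ℕ) : ℝ)) := by
          rw [← Real.exp_nat_mul]; ring_nf
      _ = Real.exp (-t) := by rw [hcast, ht_def]; ring_nf
  have h2 : Real.exp (-t) ≤ 1 / (1 + t) := by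
    rw [Real.exp_neg, inv_eq_one_div, div_le_div_iff₀ (Real.exp_pos t) h1t]
    nlinarith [Real.add_one_le_exp t, Real.exp_pos t]
  have h3 : t / (1 + t) ≤ 1 - (1 - p) ^ (x - 1) := by
    have heq : t / (1 + t) = 1 - 1 / (1 + t) := by field_simp; ring
    rw [heq]; linarith
  have h4 : 0 < 1 - (1 - p) ^ (x - 1) := lt_of_lt_of_le (by positivity) h3
  have h5 : 1 / (1 - (1 - p) ^ (x - 1)) ≤ (1 + t) / t := by
    rw [div_le_div_iff₀ h4 ht]
    have := (div_le_iff₀ h1t).mp (le_of_eq (rfl : t / (1+t) = t / (1+t)))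
    nlinarith [h3]
  have h6 : Real.log (1 / (1 - (1 - p) ^ (x - 1))) ≤ 1 / t := by
    calc Real.log (1 / (1 - (1 - p) ^ (x - 1))) ≤ Real.log ((1 + t) / t) :=
          Real.log_le_log (by positivity) h5
      _ ≤ (1 + t) / t - 1 := Real.log_le_sub_one_of_pos (by positivity)
      _ = 1 / t := by field_simp; ring
  have hx0 : (0:ℝ) ≤ (x:ℝ) := by linarith
  calc (x : ℝ) * Real.log (1 / (1 - (1 - p) ^ (x - 1)))
      ≤ (x : ℝ) * (1 / t) := mul_le_mul_of_nonneg_left h6 hx0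
    _ ≤ 2 / p := by
        rw [ht_def, mul_one_div, div_le_div_iff₀ (by positivity) hp]
        nlinarith
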